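/- Let Y and Z be independent random variables with Y ~ Exp(λ_Y) and Z ~ Exp(λ_Z), where λ_Y, λ_Z > 0. Then for every δ > 0, μ > 0 and h > 0, one has P( δ · f(Y/δ, Z/μ) < h ) ≥ 1 − exp( −(λ_Y + (μ/δ)·λ_Z) · h ). -/

import Mathlib

open MeasureTheory ProbabilityTheory Filter Set

/-- The amplify-and-forward combining function `f(x,y) = x·y/(x+y+1)`. -/
noncomputable def f (x y : ℝ) : ℝ := x * y / (x + y + 1)

lemma expMeasure_Iic {r : ℝ} (hr : 0 < r) (x : ℝ) :
    expMeasure r (Iic x) = ENNReal.ofReal (if 0 ≤ x then 1 - Real.exp (-(r * x)) else 0) := by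
  haveI : IsProbabilityMeasure (expMeasure r) := isProbabilityMeasure_expMeasure hr
  have h2 : cdf (expMeasure r) x = if 0 ≤ x then 1 - Real.exp (-(r * x)) else 0 :=
    cdf_expMeasure_eq hr x
  rw [← h2, ofReal_cdf _ x]

lemma expMeasure_Iio {r : ℝ} (hr : 0 < r) (x : ℝ) :
    expMeasure r (Iio x) = ENNReal.ofReal (if 0 ≤ x then 1 - Real.exp (-(r * x)) else 0) := by
  have hac : expMeasure r ≪ volume := by
    show volume.withDensity (ProbabilityTheory.gammaPDF 1 r) ≪ volume
    exact withDensity_absolutelyContinuous _ _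
  have hsing : expMeasure r {x} = 0 := hac (measure_singleton x)
  have hle : expMeasure r (Iic x) ≤ expMeasure r (Iio x) := by
    calc expMeasure r (Iic x) ≤ expMeasure r (Iio x ∪ {x}) := by
          refine measure_mono fun y hy => ?_
          have hy' : y ≤ x := hy
          rcases lt_or_eq_of_le hy' with h' | h'
          · exact Or.inl h'
          · exact Or.inr h'
      _ ≤ expMeasure r (Iio x) + expMeasure r {x} := measure_union_le _ _
      _ = expMeasure r (Iio x) := by rw [hsing, add_zero]
  have := le_antisymm (measure_mono Iio_subset_Iic_self) hle
  rw [this, expMeasure_Iic hr]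

lemma expMeasure_Ici {r : ℝ} (hr : 0 < r) {t : ℝ} (ht : 0 ≤ t) :
    expMeasure r (Ici t) = ENNReal.ofReal (Real.exp (-(r * t))) := by
  haveI : IsProbabilityMeasure (expMeasure r) := isProbabilityMeasure_expMeasure hr
  have : Ici t = (Iio t)ᶜ := (compl_Iio).symm
  rw [this, measure_compl measurableSet_Iio (measure_ne_top _ _), measure_univ,
    expMeasure_Iio hr, if_pos ht]
  have hle : Real.exp (-(r * t)) ≤ 1 := Real.exp_le_one_iff.mpr (by nlinarith)
  rw [show (1 : ENNReal) = ENNReal.ofReal 1 by simp,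
    ← ENNReal.ofReal_sub 1 (by nlinarith [Real.exp_pos (-(r * t))])]
  ring_nf

/-- **lower bound in the proof of Lemma 2 of the paper.**
For independent `Y ~ Exp(λ_Y)`, `Z ~ Exp(λ_Z)` and every `δ, μ, h > 0`,
`P( δ·f(Y/δ, Z/μ) < h ) ≥ 1 − exp( −(λ_Y + (μ/δ)·λ_Z)·h )`. -/
theorem relay_path_outage_lower_bound
    {Ω : Type*} [MeasurableSpace Ω] (P : Measure Ω) [IsProbabilityMeasure P]
    (lamY lamZ : ℝ) (hlamY : 0 < lamY) (hlamZ : 0 < lamZ)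
    (Y Z : Ω → ℝ) (hY : Measurable Y) (hZ : Measurable Z)
    (hYdist : Measure.map Y P = expMeasure lamY)
    (hZdist : Measure.map Z P = expMeasure lamZ)
    (hindep : IndepFun Y Z P)
    (δ μ h : ℝ) (hδ : 0 < δ) (hμ : 0 < μ) (hh : 0 < h) :
    (P {ω | δ * f (Y ω / δ) (Z ω / μ) < h}).toReal
      ≥ 1 - Real.exp (-(lamY + (μ / δ) * lamZ) * h) := by
  set t : ℝ := μ / δ * h with ht_def
  have ht : 0 ≤ t := by positivity
  set E : Set Ω := {ω | δ * f (Y ω / δ) (Z ω / μ) < h} with hE_def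
  have hfmeas : Measurable fun ω => δ * f (Y ω / δ) (Z ω / μ) := by
    unfold f
    fun_prop
  have hE : MeasurableSet E := measurableSet_lt hfmeas measurable_const
  -- null sets for negative values
  have hYneg : P (Y ⁻¹' Iio 0) = 0 := by
    rw [← Measure.map_apply hY measurableSet_Iio, hYdist, expMeasure_Iio hlamY]
    simp
  have hZneg : P (Z ⁻¹' Iio 0) = 0 := by
    rw [← Measure.map_apply hZ measurableSet_Iio, hZdist, expMeasure_Iio hlamZ]
    simp
  -- the complement inclusion
  have hsub : Eᶜ ⊆ (Y ⁻¹' Ici h ∩ Z ⁻¹' Ici t) ∪ (Y ⁻¹' Iio 0 ∪ Z ⁻¹' Iio 0) := by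
    intro ω hω
    by_cases hy0 : Y ω < 0
    · exact Or.inr (Or.inl hy0)
    by_cases hz0 : Z ω < 0
    · exact Or.inr (Or.inr hz0)
    push_neg at hy0 hz0
    left
    have hωE : h ≤ δ * f (Y ω / δ) (Z ω / μ) := not_lt.mp hω
    set x := Y ω / δ with hx
    set y := Z ω / μ with hy
    have hx0 : 0 ≤ x := by positivity
    have hy0' : 0 ≤ y := by positivity
    have hden : 0 < x + y + 1 := by linarith
    have hfx : f x y ≤ x := by
      rw [f, div_le_iff₀ hden]
      nlinarith
    have hfy : f x y ≤ y := by
      rw [f, div_le_iff₀ hden]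
      nlinarith
    constructor
    · have : h ≤ δ * x := le_trans hωE (by nlinarith)
      have : h ≤ Y ω := by
        rw [hx] at this
        calc h ≤ δ * (Y ω / δ) := this
          _ = Y ω := by field_simp
      exact this
    · have h1 : h ≤ δ * y := le_trans hωE (by nlinarith)
      have : t ≤ Z ω := by
        rw [hy] at h1
        rw [ht_def]
        rw [div_mul_eq_mul_div, div_le_iff₀ hδ]
        calc μ * h ≤ μ * (δ * (Z ω / μ)) := by nlinarith
          _ = Z ω * δ := by field_simp
      exact this
  -- probability of the intersection via independence
  have hinter : P (Y ⁻¹' Ici h ∩ Z ⁻¹' Ici t)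
      = ENNReal.ofReal (Real.exp (-(lamY + μ / δ * lamZ) * h)) := by
    rw [hindep.measure_inter_preimage_eq_mul _ _ measurableSet_Ici measurableSet_Ici,
      ← Measure.map_apply hY measurableSet_Ici, ← Measure.map_apply hZ measurableSet_Ici,
      hYdist, hZdist, expMeasure_Ici hlamY hh.le, expMeasure_Ici hlamZ ht,
      ← ENNReal.ofReal_mul (Real.exp_pos _).le, ← Real.exp_add]
    congr 1
    rw [ht_def]
    ring_nf
  have hcompl : P Eᶜ ≤ ENNReal.ofReal (Real.exp (-(lamY + μ / δ * lamZ) * h)) := by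
    calc P Eᶜ ≤ P ((Y ⁻¹' Ici h ∩ Z ⁻¹' Ici t) ∪ (Y ⁻¹' Iio 0 ∪ Z ⁻¹' Iio 0)) :=
          measure_mono hsub
      _ ≤ P (Y ⁻¹' Ici h ∩ Z ⁻¹' Ici t) + P (Y ⁻¹' Iio 0 ∪ Z ⁻¹' Iio 0) := measure_union_le _ _
      _ ≤ P (Y ⁻¹' Ici h ∩ Z ⁻¹' Ici t) + (P (Y ⁻¹' Iio 0) + P (Z ⁻¹' Iio 0)) := by
          gcongr; exact measure_union_le _ _
      _ = P (Y ⁻¹' Ici h ∩ Z ⁻¹' Ici t) := by rw [hYneg, hZneg]; simp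
      _ = _ := hinter
  have hPE : P E = 1 - P Eᶜ := by
    rw [measure_compl hE (measure_ne_top _ _), measure_univ]
    rw [ENNReal.sub_sub_cancel (by simp) (prob_le_one)]
  have hEc_toReal : (P Eᶜ).toReal ≤ Real.exp (-(lamY + μ / δ * lamZ) * h) := by
    have := ENNReal.toReal_mono (by simp) hcompl
    rwa [ENNReal.toReal_ofReal (Real.exp_pos _).le] at this
  have hPE_toReal : (P E).toReal = 1 - (P Eᶜ).toReal := by
    rw [hPE, ENNReal.toReal_sub_of_le prob_le_one (by simp)]
    simp
  rw [hPE_toReal]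
  linarith
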